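/- Let $V$ be a finite-dimensional vector space over $\mathbb{F} \in \{\mathbb{R}, \mathbb{C}\}$, let $u \in \mathrm{End}(V)$, and let $x_0 \in V$ be a non-zero vector with $u(x_0) = 0$. Then there exists an open neighborhood $U$ of $u$ in $\mathrm{End}(V)$ and a continuous map $f : U \to V$ such that $f(u) = x_0$ and $v(f(v)) = 0$ for every $v \in U$ having the same rank as $u$. -/

import Mathlib

open Module

private lemma clm_isUnit_of_bijective {𝕜 : Type} [RCLike 𝕜] {V : Type} [NormedAddCommGroup V]
    [NormedSpace 𝕜 V] [FiniteDimensional 𝕜 V] (a : V →L[𝕜] V)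
    (h : Function.Bijective a) : IsUnit a := by
  let e : V ≃ₗ[𝕜] V := LinearEquiv.ofBijective (a : V →ₗ[𝕜] V) h
  let e' : V ≃L[𝕜] V := e.toContinuousLinearEquiv
  refine ⟨⟨a, e'.symm.toContinuousLinearMap, ?_, ?_⟩, rfl⟩
  · ext x
    exact e.apply_symm_apply x
  · ext x
    exact e.symm_apply_apply x

private lemma clm_injective_of_isUnit {𝕜 : Type} [RCLike 𝕜] {V : Type} [NormedAddCommGroup V]
    [NormedSpace 𝕜 V] (a : V →L[𝕜] V) (h : IsUnit a) : Function.Injective a := by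
  obtain ⟨e, rfl⟩ := h
  intro x y hxy
  have h2 := congrArg (fun z => (↑e⁻¹ : V →L[𝕜] V) z) hxy
  simpa only [← ContinuousLinearMap.mul_apply, e.inv_mul, ContinuousLinearMap.one_apply] using h2

set_option maxHeartbeats 1000000 in
theorem stmt10 {𝕜 : Type} [RCLike 𝕜] {V : Type} [NormedAddCommGroup V]
    [NormedSpace 𝕜 V] [FiniteDimensional 𝕜 V] (u : V →L[𝕜] V) (x₀ : V)
    (hx₀ : x₀ ≠ 0) (hux₀ : u x₀ = 0) :
    ∃ U : Set (V →L[𝕜] V), IsOpen U ∧ u ∈ U ∧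
      ∃ f : (V →L[𝕜] V) → V, ContinuousOn f U ∧ f u = x₀ ∧
        ∀ v ∈ U, Module.finrank 𝕜 (LinearMap.range (v : V →ₗ[𝕜] V)) =
            Module.finrank 𝕜 (LinearMap.range (u : V →ₗ[𝕜] V)) →
          v (f v) = 0 := by
  classical
  haveI : CompleteSpace V := FiniteDimensional.complete 𝕜 V
  set u' : V →ₗ[𝕜] V := (u : V →ₗ[𝕜] V) with hu'
  obtain ⟨W, hW⟩ := Submodule.exists_isCompl (LinearMap.ker u')
  obtain ⟨C, hC⟩ := Submodule.exists_isCompl (LinearMap.range u')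
  have hdim : finrank 𝕜 (LinearMap.ker u') = finrank 𝕜 C := by
    have h1 := LinearMap.finrank_range_add_finrank_ker u'
    have h2 := Submodule.finrank_add_eq_of_isCompl hC
    omega
  set j₀ : (LinearMap.ker u') ≃ₗ[𝕜] C := LinearEquiv.ofFinrankEq _ _ hdim with hj₀
  set pK : V →ₗ[𝕜] (LinearMap.ker u') := (LinearMap.ker u').projectionOnto W hW with hpK
  set pR : V →ₗ[𝕜] (LinearMap.range u') := (LinearMap.range u').projectionOnto C hC with hpR
  set pW : V →ₗ[𝕜] W := W.projectionOnto _ hW.symm with hpW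
  set j : V →L[𝕜] V :=
    LinearMap.toContinuousLinearMap (C.subtype ∘ₗ j₀.toLinearMap ∘ₗ pK) with hj
  set π : V →L[𝕜] V :=
    LinearMap.toContinuousLinearMap ((LinearMap.range u').subtype ∘ₗ pR) with hπ
  set q : V →L[𝕜] V := LinearMap.toContinuousLinearMap (W.subtype ∘ₗ pW) with hq
  -- basic facts
  have hjapp : ∀ x : V, j x = (j₀ (pK x) : V) := fun x => rfl
  have hjmem : ∀ x : V, j x ∈ C := fun x => (j₀ (pK x)).2
  have hjW : ∀ w ∈ W, j w = 0 := by
    intro w hw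
    rw [hjapp, Submodule.projectionOnto_apply_of_mem_right hW hw]
    simp
  have hjK : ∀ x (hx : x ∈ LinearMap.ker u'), j x = (j₀ ⟨x, hx⟩ : V) := by
    intro x hx
    rw [hjapp]
    exact congrArg _ (congrArg _ (Submodule.linearProjOfIsCompl_apply_left hW ⟨x, hx⟩))
  have hπapp : ∀ x : V, π x = (pR x : V) := fun x => rfl
  have hπC : ∀ c ∈ C, π c = 0 := by
    intro c hc
    rw [hπapp, Submodule.projectionOnto_apply_of_mem_right hC hc]
    simp
  have hπR : ∀ x ∈ LinearMap.range u', π x = x := by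
    intro x hx
    rw [hπapp]
    exact congrArg _ (Submodule.linearProjOfIsCompl_apply_left hC ⟨x, hx⟩)
  have hqapp : ∀ x : V, q x = (pW x : V) := fun x => rfl
  have hqW : ∀ w ∈ W, q w = w := by
    intro w hw
    rw [hqapp]
    exact congrArg _ (Submodule.linearProjOfIsCompl_apply_left hW.symm ⟨w, hw⟩)
  have hqK : ∀ x : V, x - q x ∈ LinearMap.ker u' := by
    intro x
    have h := Submodule.projection_add_projection_eq_self hW x
    have h2 : x - q x = (pK x : V) := by
      rw [hqapp]
      exact sub_eq_iff_eq_add.2 h.symm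
    rw [h2]
    exact (pK x).2
  have hx₀K : x₀ ∈ LinearMap.ker u' := by
    simp only [LinearMap.mem_ker, hu', ContinuousLinearMap.coe_coe, hux₀]
  -- u + j is a unit
  have hadd_inj : ∀ v : V →L[𝕜] V, (∀ z : V, (v + j) z = 0 → z = 0) → Function.Injective (v + j) := by
    intro v h x y hxy
    have : (v + j) (x - y) = 0 := by rw [map_sub, hxy, sub_self]
    have := h _ this
    exact sub_eq_zero.1 this
  have huj_inj : Function.Injective (u + j) := by
    apply hadd_inj
    intro z h0
    have h0' : u z + j z = 0 := h0
    have h1 : u z = - j z := eq_neg_of_add_eq_zero_left h0'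
    have h2 : u z ∈ LinearMap.range u' := ⟨z, rfl⟩
    have h3 : u z ∈ C := h1 ▸ C.neg_mem (hjmem z)
    have h4 : u z = 0 := (Submodule.disjoint_def.1 hC.disjoint) _ h2 h3
    have h5 : z ∈ LinearMap.ker u' := by
      simpa only [LinearMap.mem_ker, ContinuousLinearMap.coe_coe, hu'] using h4
    have h6 : j z = 0 := by rw [show j z = -(- j z) by abel, ← h1, h4, neg_zero]
    rw [hjK z h5] at h6
    have h7 : j₀ ⟨z, h5⟩ = 0 := Subtype.ext (by simpa using h6)
    have h8 : (⟨z, h5⟩ : LinearMap.ker u') = 0 := j₀.injective (by simpa using h7)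
    exact congrArg Subtype.val h8
  have huj : IsUnit (u + j) := by
    apply clm_isUnit_of_bijective
    exact ⟨huj_inj, (LinearMap.injective_iff_surjective
      (f := ((u + j : V →L[𝕜] V) : V →ₗ[𝕜] V))).1 huj_inj⟩
  -- π ∘ u ∘ q + j = u + j
  have hπuq : π.comp (u.comp q) + j = u + j := by
    ext x
    simp only [ContinuousLinearMap.add_apply, ContinuousLinearMap.comp_apply]
    congr 1
    have huq : u (q x) = u x := by
      have h := hqK x
      have : u' (x - q x) = 0 := h
      have h2 : u x - u (q x) = 0 := by
        simpa only [hu', ContinuousLinearMap.coe_coe, map_sub] using this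
      exact (sub_eq_zero.1 h2).symm
    rw [huq]
    exact hπR (u x) ⟨x, rfl⟩
  -- the open set
  set U : Set (V →L[𝕜] V) :=
    {v | IsUnit (v + j)} ∩ {v | IsUnit (π.comp (v.comp q) + j)} with hU
  have hUopen : IsOpen U := by
    apply IsOpen.inter
    · exact Units.isOpen.preimage (continuous_id.add continuous_const)
    · have h1 : Continuous fun v : V →L[𝕜] V => v.comp q :=
        continuous_id.clm_comp continuous_const
      have h2 : Continuous fun v : V →L[𝕜] V => π.comp (v.comp q) + j :=
        (continuous_const.clm_comp h1).add continuous_const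
      exact Units.isOpen.preimage h2
  have hUu : u ∈ U := ⟨huj, by rw [Set.mem_setOf_eq, hπuq]; exact huj⟩
  -- the map f
  set f : (V →L[𝕜] V) → V := fun v => Ring.inverse (v + j) (j x₀) with hf
  have hfcont : ContinuousOn f U := by
    intro v hv
    apply ContinuousAt.continuousWithinAt
    have h1 : ContinuousAt (fun v : V →L[𝕜] V => Ring.inverse (v + j)) v := by
      have := NormedRing.inverse_continuousAt hv.1.unit
      rw [hv.1.unit_spec] at this
      have hadd : Continuous fun w : V →L[𝕜] V => w + j := continuous_id.add continuous_const
      exact ContinuousAt.comp (g := Ring.inverse) (f := fun w : V →L[𝕜] V => w + j)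
        (x := v) this hadd.continuousAt
    exact ((ContinuousLinearMap.apply 𝕜 V (j x₀)).continuous.continuousAt).comp h1
  have hfu : f u = x₀ := by
    have h1 : (u + j) x₀ = j x₀ := by
      simp only [ContinuousLinearMap.add_apply, hux₀, zero_add]
    rw [hf]
    show Ring.inverse (u + j) (j x₀) = x₀
    rw [← h1, ← ContinuousLinearMap.mul_apply, Ring.inverse_mul_cancel _ huj,
      ContinuousLinearMap.one_apply]
  refine ⟨U, hUopen, hUu, f, hfcont, hfu, ?_⟩
  -- the kernel property
  intro v hv hrank
  set y := f v with hy
  have hvy : (v + j) y = j x₀ := by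
    rw [hy, hf]
    show (v + j) (Ring.inverse (v + j) (j x₀)) = j x₀
    rw [← ContinuousLinearMap.mul_apply, Ring.mul_inverse_cancel _ hv.1,
      ContinuousLinearMap.one_apply]
  have hvyC : v y ∈ C := by
    have : v y = j x₀ - j y := by
      have : v y + j y = j x₀ := hvy
      rw [← this]; abel
    rw [this, ← map_sub]
    exact hjmem _
  -- injectivity of π ∘ v on W
  have ha_inj : Function.Injective (π.comp (v.comp q) + j) := clm_injective_of_isUnit _ hv.2
  have hπvW : ∀ w ∈ W, π (v w) = 0 → w = 0 := by
    intro w hw hπvw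
    have h1 : (π.comp (v.comp q) + j) w = 0 := by
      simp only [ContinuousLinearMap.add_apply, ContinuousLinearMap.comp_apply,
        hqW w hw, hπvw, hjW w hw, add_zero]
    have h2 : (π.comp (v.comp q) + j) 0 = 0 := map_zero _
    exact ha_inj (h1.trans h2.symm)
  have hvW_inj : ∀ w ∈ W, v w = 0 → w = 0 := by
    intro w hw hvw
    exact hπvW w hw (by rw [hvw, map_zero])
  -- S = v(W) has full rank
  set S : Submodule 𝕜 V := W.map (v : V →ₗ[𝕜] V) with hS
  have hSrange : S = LinearMap.range ((v : V →ₗ[𝕜] V) ∘ₗ W.subtype) := by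
    rw [LinearMap.range_comp, Submodule.range_subtype]
  have hker : LinearMap.ker ((v : V →ₗ[𝕜] V) ∘ₗ W.subtype) = ⊥ := by
    rw [LinearMap.ker_eq_bot']
    intro w hw
    have : v (w : V) = 0 := hw
    exact Subtype.ext (hvW_inj w w.2 this)
  have hSW : finrank 𝕜 S = finrank 𝕜 W := by
    have h := LinearMap.finrank_range_add_finrank_ker ((v : V →ₗ[𝕜] V) ∘ₗ W.subtype)
    rw [hker, finrank_bot, add_zero] at h
    rw [hSrange, h]
  have hWr : finrank 𝕜 W = finrank 𝕜 (LinearMap.range u') := by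
    have h1 := LinearMap.finrank_range_add_finrank_ker u'
    have h2 := Submodule.finrank_add_eq_of_isCompl hW
    omega
  have hSle : S ≤ LinearMap.range (v : V →ₗ[𝕜] V) := by
    rintro _ ⟨w, _, rfl⟩
    exact ⟨w, rfl⟩
  have hSeq : S = LinearMap.range (v : V →ₗ[𝕜] V) := by
    apply Submodule.eq_of_le_of_finrank_eq hSle
    rw [hSW, hWr, hrank]
  -- conclude
  have hvyS : v y ∈ S := by
    rw [hSeq]
    exact ⟨y, rfl⟩
  obtain ⟨w, hwW, hwv⟩ := hvyS
  have hπvy : π (v y) = 0 := hπC _ hvyC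
  have : π (v w) = 0 := by
    rw [show (v : V →ₗ[𝕜] V) w = v w from rfl] at hwv
    rw [hwv]; exact hπvy
  have hw0 : w = 0 := hπvW w hwW this
  rw [← hwv, hw0]
  simp
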